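/- arXiv:1805.00381 — 2 statements merged into one kernel-verified Lean document; each statement's English description precedes it below -/
import Mathlib

section
/- Provably in EA, S + Rfn^n(S) ⊆ C^{n+1}_S(T): every consequence of S together with the relativized local reflection schema {[n]_S ψ → ψ : ψ a sentence} is provably (n+1)-provable in any extension T of EA. -/
/-- An abstract propositional language with implication and falsum. -/
structure Lang (F : Type) where
  imp : F → F → F
  bot : F

namespace Lang
variable {F : Type} (L : Lang F)
def neg (φ : F) : F := L.imp φ L.bot
def top : F := L.neg L.bot
def conj (φ ψ : F) : F := L.neg (L.imp φ (L.neg ψ))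
def iff (φ ψ : F) : F := L.conj (L.imp φ ψ) (L.imp ψ φ)
end Lang

/-- Classical propositional derivability from a set of axioms `Γ`
(a Hilbert system with modus ponens). -/
inductive Deriv {F : Type} (L : Lang F) (Γ : Set F) : F → Prop
  | hyp {φ} : φ ∈ Γ → Deriv L Γ φ
  | ax1 (φ ψ) : Deriv L Γ (L.imp φ (L.imp ψ φ))
  | ax2 (φ ψ χ) : Deriv L Γ (L.imp (L.imp φ (L.imp ψ χ)) (L.imp (L.imp φ ψ) (L.imp φ χ)))
  | ax3 (φ ψ) : Deriv L Γ (L.imp (L.imp (L.neg φ) (L.neg ψ)) (L.imp ψ φ))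
  | mp {φ ψ} : Deriv L Γ (L.imp φ ψ) → Deriv L Γ φ → Deriv L Γ ψ

/-- The local reflection schema for a provability predicate `Bx`. -/
def RfnSet {F : Type} (L : Lang F) (Bx : F → F) : Set F := {χ | ∃ ψ, χ = L.imp (Bx ψ) ψ}

namespace DerivAux
variable {F : Type} {L : Lang F} {Γ Δ : Set F} {φ ψ χ : F}

theorem weaken (h : Deriv L Γ φ) (hs : Γ ⊆ Δ) : Deriv L Δ φ := by
  induction h with
  | hyp h => exact .hyp (hs h)
  | ax1 a b => exact .ax1 a b
  | ax2 a b c => exact .ax2 a b c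
  | ax3 a b => exact .ax3 a b
  | mp _ _ ih1 ih2 => exact ih1.mp ih2

theorem impRefl (φ : F) : Deriv L Γ (L.imp φ φ) :=
  ((Deriv.ax2 φ (L.imp φ φ) φ).mp (.ax1 _ _)).mp (.ax1 _ _)

theorem deduction (h : Deriv L (insert φ Γ) ψ) : Deriv L Γ (L.imp φ ψ) := by
  induction h with
  | hyp h =>
    rcases Set.mem_insert_iff.1 h with rfl | h
    · exact impRefl _
    · exact (Deriv.ax1 _ _).mp (.hyp h)
  | ax1 a b => exact (Deriv.ax1 _ _).mp (.ax1 a b)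
  | ax2 a b c => exact (Deriv.ax1 _ _).mp (.ax2 a b c)
  | ax3 a b => exact (Deriv.ax1 _ _).mp (.ax3 a b)
  | mp _ _ ih1 ih2 => exact ((Deriv.ax2 _ _ _).mp ih1).mp ih2

theorem syl (h1 : Deriv L Γ (L.imp φ ψ)) (h2 : Deriv L Γ (L.imp ψ χ)) :
    Deriv L Γ (L.imp φ χ) :=
  ((Deriv.ax2 φ ψ χ).mp ((Deriv.ax1 _ _).mp h2)).mp h1

theorem efq (φ : F) : Deriv L Γ (L.imp L.bot φ) := by
  have hnb : Deriv L Γ (L.neg L.bot) := impRefl L.bot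
  exact (Deriv.ax3 φ L.bot).mp ((Deriv.ax1 _ _).mp hnb)

theorem pnn (φ : F) : Deriv L Γ (L.imp φ (L.neg (L.neg φ))) := by
  apply deduction
  show Deriv L _ (L.imp (L.imp φ L.bot) L.bot)
  apply deduction
  exact (Deriv.hyp (Set.mem_insert _ _)).mp
    (.hyp (Set.mem_insert_of_mem _ (Set.mem_insert _ _)))

theorem dne (φ : F) : Deriv L Γ (L.imp (L.neg (L.neg φ)) φ) :=
  (Deriv.ax3 φ (L.neg (L.neg φ))).mp (pnn (L.neg φ))

theorem caseSplit (h1 : Deriv L Γ (L.imp φ χ)) (h2 : Deriv L Γ (L.imp (L.neg φ) χ)) :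
    Deriv L Γ χ := by
  have key : Deriv L Γ (L.imp (L.neg χ) L.bot) := by
    apply deduction
    have hnc : Deriv L (insert (L.neg χ) Γ) (L.imp χ L.bot) := .hyp (Set.mem_insert _ _)
    have h1' : Deriv L (insert (L.neg χ) Γ) (L.imp φ χ) :=
      weaken h1 (Set.subset_insert _ _)
    have h2' : Deriv L (insert (L.neg χ) Γ) (L.imp (L.neg φ) χ) :=
      weaken h2 (Set.subset_insert _ _)
    have hna : Deriv L (insert (L.neg χ) Γ) (L.neg φ) := by
      show Deriv L _ (L.imp φ L.bot)
      exact syl h1' hnc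
    exact hnc.mp (h2'.mp hna)
  exact (dne χ).mp key

end DerivAux

/-- Provably (in the abstract two-modality setting with
`B₁ = [n]_S`, `B₂ = [n+1]_S`): every consequence of `S` together with the
relativized local reflection schema `{[n]_S ψ → ψ}` is provably
`(n+1)`-provable in any extension `T` of `EA`, i.e.
`S + Rfn^n(S) ⊆ C^{n+1}_S(T)`. -/
theorem stmt8 {F : Type} (L : Lang F) (EA S T : Set F) (B1 B2 : F → F)
    (hExtT : ∀ φ, Deriv L EA φ → Deriv L T φ)
    (hExtS : ∀ φ, Deriv L EA φ → Deriv L S φ)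
    (mono : ∀ ψ, Deriv L EA (L.imp (B1 ψ) (B2 ψ)))
    (nec2 : ∀ φ, Deriv L S φ → Deriv L EA (B2 φ))
    (dist2 : ∀ φ ψ, Deriv L EA (L.imp (B2 (L.imp φ ψ)) (L.imp (B2 φ) (B2 ψ))))
    (compl : ∀ ψ, Deriv L EA (L.imp (L.neg (B1 ψ)) (B2 (L.neg (B1 ψ))))) :
    ∀ φ, Deriv L (S ∪ RfnSet L B1) φ → Deriv L T (B2 φ) := by
  intro φ h
  induction h with
  | hyp h =>
    rcases h with h | ⟨ψ, rfl⟩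
    · exact hExtT _ (nec2 _ (.hyp h))
    · -- reflection instance: T ⊢ B2 (B1 ψ → ψ)
      apply hExtT
      -- case 1: B1 ψ → B2 (B1 ψ → ψ)
      have taut1 : Deriv L S (L.imp ψ (L.imp (B1 ψ) ψ)) := .ax1 ψ (B1 ψ)
      have b : Deriv L EA (L.imp (B2 ψ) (B2 (L.imp (B1 ψ) ψ))) :=
        (dist2 ψ (L.imp (B1 ψ) ψ)).mp (nec2 _ taut1)
      have c1 : Deriv L EA (L.imp (B1 ψ) (B2 (L.imp (B1 ψ) ψ))) :=
        DerivAux.syl (mono ψ) b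
      -- case 2: ¬ B1 ψ → B2 (B1 ψ → ψ)
      have taut2 : Deriv L S (L.imp (L.neg (B1 ψ)) (L.imp (B1 ψ) ψ)) := by
        apply DerivAux.deduction
        apply DerivAux.deduction
        have hb : Deriv L (insert (B1 ψ) (insert (L.neg (B1 ψ)) S)) L.bot :=
          Deriv.mp (.hyp (Set.mem_insert_of_mem _ (Set.mem_insert _ _)))
            (.hyp (Set.mem_insert _ _))
        exact (DerivAux.efq ψ).mp hb
      have d : Deriv L EA (L.imp (B2 (L.neg (B1 ψ))) (B2 (L.imp (B1 ψ) ψ))) :=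
        (dist2 (L.neg (B1 ψ)) (L.imp (B1 ψ) ψ)).mp (nec2 _ taut2)
      have c2 : Deriv L EA (L.imp (L.neg (B1 ψ)) (B2 (L.imp (B1 ψ) ψ))) :=
        DerivAux.syl (compl ψ) d
      exact DerivAux.caseSplit c1 c2
  | ax1 a b => exact hExtT _ (nec2 _ (.ax1 a b))
  | ax2 a b c => exact hExtT _ (nec2 _ (.ax2 a b c))
  | ax3 a b => exact hExtT _ (nec2 _ (.ax3 a b))
  | mp _ _ ih1 ih2 => exact ((hExtT _ (dist2 _ _)).mp ih1).mp ih2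
end

section
/- Provably in EA, for every Π₁-sentence π: EA⁺ ⊢ π if and only if EA ⊢ [1]_EA π. -/
section Aux
variable {F : Type} {L : Lang F} {Γ Δ : Set F}

lemma Deriv.weaken (h : Γ ⊆ Δ) {φ} (d : Deriv L Γ φ) : Deriv L Δ φ := by
  induction d with
  | hyp hm => exact .hyp (h hm)
  | ax1 φ ψ => exact .ax1 φ ψ
  | ax2 φ ψ χ => exact .ax2 φ ψ χ
  | ax3 φ ψ => exact .ax3 φ ψ
  | mp _ _ ih1 ih2 => exact .mp ih1 ih2

lemma Deriv.imp_id (φ : F) : Deriv L Γ (L.imp φ φ) :=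
  .mp (.mp (.ax2 φ (L.imp φ φ) φ) (.ax1 φ (L.imp φ φ))) (.ax1 φ φ)

lemma Deriv.deduction {φ ψ : F} (d : Deriv L (Γ ∪ {φ}) ψ) : Deriv L Γ (L.imp φ ψ) := by
  induction d with
  | @hyp χ hm =>
    rcases hm with hΓ | hφ
    · exact .mp (.ax1 χ φ) (.hyp hΓ)
    · cases hφ; exact Deriv.imp_id φ
  | ax1 a b => exact .mp (.ax1 _ φ) (.ax1 a b)
  | ax2 a b c => exact .mp (.ax1 _ φ) (.ax2 a b c)
  | ax3 a b => exact .mp (.ax1 _ φ) (.ax3 a b)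
  | @mp a b _ _ ih1 ih2 => exact .mp (.mp (.ax2 φ a b) ih1) ih2

lemma Deriv.imp_trans {φ ψ χ : F} (h1 : Deriv L Γ (L.imp φ ψ))
    (h2 : Deriv L Γ (L.imp ψ χ)) : Deriv L Γ (L.imp φ χ) :=
  .mp (.mp (.ax2 φ ψ χ) (.mp (.ax1 _ φ) h2)) h1

/-- `mp` under a hypothesis. -/
lemma Deriv.mp_under {φ ψ χ : F} (h1 : Deriv L Γ (L.imp φ (L.imp ψ χ)))
    (h2 : Deriv L Γ ψ) : Deriv L Γ (L.imp φ χ) :=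
  .mp (.mp (.ax2 φ ψ χ) h1) (.mp (.ax1 ψ φ) h2)

/-- Proof by contradiction: if `¬φ` yields `⊥`, then `φ`. -/
lemma Deriv.negE {φ : F} (h : Deriv L Γ (L.imp (L.neg φ) L.bot)) : Deriv L Γ φ := by
  have hb : Deriv L Γ (L.imp L.bot (L.neg L.top)) := by
    have := Deriv.ax1 (L := L) (Γ := Γ) L.bot L.top
    exact this
  have h1 : Deriv L Γ (L.imp (L.neg φ) (L.neg L.top)) := h.imp_trans hb
  have h2 : Deriv L Γ (L.imp L.top φ) := .mp (.ax3 φ L.top) h1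
  exact .mp h2 (Deriv.imp_id L.bot)

lemma Deriv.dne (φ : F) : Deriv L Γ (L.imp (L.neg (L.neg φ)) φ) := by
  apply Deriv.deduction
  apply Deriv.negE
  exact .hyp (Or.inr rfl)

lemma Deriv.efq (φ : F) : Deriv L Γ (L.imp L.bot φ) := by
  have h1 : Deriv L Γ (L.imp L.bot (L.neg (L.neg φ))) := .ax1 L.bot (L.neg φ)
  exact h1.imp_trans (Deriv.dne φ)

lemma Deriv.contrapose {φ ψ : F} (h : Deriv L Γ (L.imp φ ψ)) :
    Deriv L Γ (L.imp (L.neg ψ) (L.neg φ)) := by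
  apply Deriv.deduction
  apply Deriv.deduction
  have hφ : Deriv L ((Γ ∪ {L.neg ψ}) ∪ {φ}) φ := .hyp (Or.inr rfl)
  have hnψ : Deriv L ((Γ ∪ {L.neg ψ}) ∪ {φ}) (L.imp ψ L.bot) :=
    .hyp (Or.inl (Or.inr rfl))
  have hw : Deriv L ((Γ ∪ {L.neg ψ}) ∪ {φ}) (L.imp φ ψ) :=
    h.weaken (fun x hx => Or.inl (Or.inl hx))
  exact .mp hnψ (.mp hw hφ)

/-- Case split on `φ ∨ ¬φ`. -/
lemma Deriv.byCases {φ χ : F} (h1 : Deriv L Γ (L.imp φ χ))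
    (h2 : Deriv L Γ (L.imp (L.neg φ) χ)) : Deriv L Γ χ := by
  apply Deriv.negE
  apply Deriv.deduction
  have hnχ : Deriv L (Γ ∪ {L.neg χ}) (L.neg χ) := .hyp (Or.inr rfl)
  have hw1 : Deriv L (Γ ∪ {L.neg χ}) (L.imp φ χ) := h1.weaken (fun x hx => Or.inl hx)
  have hw2 : Deriv L (Γ ∪ {L.neg χ}) (L.imp (L.neg φ) χ) := h2.weaken (fun x hx => Or.inl hx)
  have hnφ : Deriv L (Γ ∪ {L.neg χ}) (L.neg φ) := .mp hw1.contrapose hnχ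
  exact .mp hnχ (.mp hw2 hnφ)

end Aux

/-- Provably, for every `Π₁`-sentence `π`:
`EA⁺ ⊢ π` iff `EA ⊢ [1]_EA π`, where `EA⁺ ≡ EA + ⟨1⟩_EA ⊤` with
`⟨1⟩_EA ⊤ := ¬[1]_EA ⊥`, and `B = [1]_EA` satisfies the Löb conditions and
provable `Σ₂`-completeness for `Π₁`-sentences and their negations. -/
theorem stmt15 {F : Type} (L : Lang F) (EA : Set F) (B : F → F) (Pi1 : Set F)
    (nec : ∀ φ, Deriv L EA φ → Deriv L EA (B φ))
    (dist : ∀ φ ψ, Deriv L EA (L.imp (B (L.imp φ ψ)) (L.imp (B φ) (B ψ))))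
    (trans : ∀ φ, Deriv L EA (L.imp (B φ) (B (B φ))))
    (complPos : ∀ π ∈ Pi1, Deriv L EA (L.imp π (B π)))
    (complNeg : ∀ π ∈ Pi1, Deriv L EA (L.imp (L.neg π) (B (L.neg π)))) :
    ∀ π ∈ Pi1, (Deriv L (EA ∪ {L.neg (B L.bot)}) π ↔ Deriv L EA (B π)) := by
  intro π hπ
  set Γ' : Set F := EA ∪ {L.neg (B L.bot)} with hΓ'
  have hsub : EA ⊆ Γ' := fun x hx => Or.inl hx
  constructor
  · -- EA⁺ ⊢ π  →  EA ⊢ Bπ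
    intro h
    have hd : Deriv L EA (L.imp (L.neg (B L.bot)) π) := Deriv.deduction h
    -- contrapose: ¬π → ¬¬(B⊥) → B⊥
    have h1 : Deriv L EA (L.imp (L.neg π) (L.neg (L.neg (B L.bot)))) := hd.contrapose
    have h2 : Deriv L EA (L.imp (L.neg π) (B L.bot)) :=
      h1.imp_trans (Deriv.dne (B L.bot))
    -- B⊥ → Bπ
    have h3 : Deriv L EA (B (L.imp L.bot π)) := nec _ (Deriv.efq π)
    have h4 : Deriv L EA (L.imp (B L.bot) (B π)) := .mp (dist L.bot π) h3
    have h5 : Deriv L EA (L.imp (L.neg π) (B π)) := h2.imp_trans h4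
    exact Deriv.byCases (complPos π hπ) h5
  · -- EA ⊢ Bπ  →  EA⁺ ⊢ π
    intro h
    apply Deriv.negE
    -- ¬π → B¬π → (Bπ → B⊥) , Bπ provable, so ¬π → B⊥ → ⊥
    have h1 : Deriv L Γ' (L.imp (L.neg π) (B (L.neg π))) := (complNeg π hπ).weaken hsub
    have h2 : Deriv L Γ' (L.imp (B (L.imp π L.bot)) (L.imp (B π) (B L.bot))) :=
      (dist π L.bot).weaken hsub
    have h3 : Deriv L Γ' (L.imp (L.neg π) (L.imp (B π) (B L.bot))) := h1.imp_trans h2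
    have hBπ : Deriv L Γ' (B π) := h.weaken hsub
    have h4 : Deriv L Γ' (L.imp (L.neg π) (B L.bot)) := h3.mp_under hBπ
    have hc : Deriv L Γ' (L.imp (B L.bot) L.bot) := .hyp (Or.inr rfl)
    exact h4.imp_trans hc
end
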